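/- Let A be an extremal set in a real Hilbert space H with d(A) = √2. Then for every ε ∈ (0, √2) and every positive integer p, there exist p + 1 points z_1, …, z_{p+1} ∈ A such that ‖z_i − z_j‖ ≥ √2 − ε for all i ≠ j. -/

import Mathlib

noncomputable def chebRadius {H : Type*} [NormedAddCommGroup H] (A : Set H) : ℝ :=
  ⨅ y : H, ⨆ x : A, ‖(x : H) - y‖

private lemma aux_sq_le {x r : ℝ} (h0 : 0 ≤ x) (h : x ≤ r) : x ^ 2 ≤ r ^ 2 := by nlinarith

private lemma aux_sq_ge {x a : ℝ} (h0 : 0 ≤ a) (h : a ≤ x) : a ^ 2 ≤ x ^ 2 := by nlinarith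

private lemma aux_threeP {P M : ℝ} (h1 : 1 ≤ P) (hM : M = 7 * P ^ 2 + P) : 3 * P ≤ M := by
  nlinarith

private lemma aux_oneM {P M : ℝ} (h1 : 1 ≤ P) (hM : M = 7 * P ^ 2 + P) : 1 ≤ M := by
  nlinarith

private lemma aux_dsq {δ : ℝ} (h0 : 0 < δ) (h1 : δ ≤ 1) : δ ^ 2 ≤ δ := by nlinarith

private lemma aux_innS {P s δ u nS q E : ℝ} (hP : 1 ≤ P) (hs0 : 0 < s) (hs2 : s ^ 2 = δ)
    (hE : E = u ^ 2 - 2 * (s * q) + s ^ 2 * nS ^ 2) (h1 : (1 - δ) ^ 2 ≤ E)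
    (hu0 : 0 ≤ u) (hu : u ≤ 1 + δ) (hnS0 : 0 ≤ nS) (hnS : nS ≤ 2 * P) :
    q ≤ 4 * P ^ 2 * s := by
  have hu2 : u ^ 2 ≤ (1 + δ) ^ 2 := aux_sq_le hu0 hu
  have hnS2 : nS ^ 2 ≤ (2 * P) ^ 2 := aux_sq_le hnS0 hnS
  have hS2' : s ^ 2 * nS ^ 2 ≤ s ^ 2 * (2 * P) ^ 2 :=
    mul_le_mul_of_nonneg_left hnS2 (sq_nonneg s)
  have hP2 : s ^ 2 * 1 ≤ s ^ 2 * P ^ 2 :=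
    mul_le_mul_of_nonneg_left (by nlinarith) (sq_nonneg s)
  have h2 : q * (2 * s) ≤ (4 * P ^ 2 * s) * (2 * s) := by nlinarith [hP2]
  exact le_of_mul_le_mul_right h2 (by positivity)

private lemma aux_low {a b q d2 u w : ℝ} (ha : 0 ≤ a) (hb : 0 ≤ b)
    (ha1 : a ≤ 1) (hb1 : b ≤ 1) (h2 : 1 - a ≤ u) (h3 : 1 - b ≤ w)
    (hd : d2 ≤ 2) (hexp : d2 = u ^ 2 - 2 * q + w ^ 2) :
    -(a + b) ≤ q := by
  have hu2 : (1 - a) ^ 2 ≤ u ^ 2 := aux_sq_ge (by linarith) h2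
  have hw2 : (1 - b) ^ 2 ≤ w ^ 2 := aux_sq_ge (by linarith) h3
  nlinarith [sq_nonneg a, sq_nonneg b]

private lemma aux_new {P n s η q : ℝ} (hP : 1 ≤ P) (hn0 : 0 ≤ n) (hnp : n ≤ P) (hs0 : 0 < s)
    (hη : s ≤ η) (hq : q ≤ 4 * P ^ 2 * s + n * (3 * P * s + η)) :
    q ≤ (7 * P ^ 2 + P) * η := by
  have h1 : 4 * P ^ 2 * s ≤ 4 * P ^ 2 * η :=
    mul_le_mul_of_nonneg_left hη (by positivity)
  have h2 : n * (3 * P * s + η) ≤ P * (3 * P * η + η) := by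
    have hs' : 3 * P * s ≤ 3 * P * η := mul_le_mul_of_nonneg_left hη (by positivity)
    have hx : 0 ≤ 3 * P * η + η := by nlinarith
    have := mul_le_mul hnp (by linarith : 3 * P * s + η ≤ 3 * P * η + η) (by nlinarith) (by linarith)
    linarith
  nlinarith

private lemma aux_final {r ε η q N wi wj : ℝ} (hr2 : r ^ 2 = 2) (hr0 : 0 ≤ r)
    (hε0 : 0 < ε) (hεr : ε < r) (hη0 : 0 < η) (hη6 : 6 * η ≤ ε) (hη1 : η ≤ 1)
    (hwi : 1 - η ≤ wi) (hwj : 1 - η ≤ wj) (hq : q ≤ η) (hN0 : 0 ≤ N)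
    (hexp : N ^ 2 = wi ^ 2 - 2 * q + wj ^ 2) : r - ε ≤ N := by
  have hwi2 : (1 - η) ^ 2 ≤ wi ^ 2 := aux_sq_ge (by linarith) hwi
  have hwj2 : (1 - η) ^ 2 ≤ wj ^ 2 := aux_sq_ge (by linarith) hwj
  have hr1 : 1 < r := by nlinarith
  have hkey : (r - ε) ^ 2 ≤ N ^ 2 := by nlinarith [sq_nonneg η]
  nlinarith [sq_nonneg (N - (r - ε))]

set_option maxHeartbeats 1000000 in
theorem stmt8 {H : Type*} [NormedAddCommGroup H] [InnerProductSpace ℝ H] [CompleteSpace H] (A : Set H)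
    (hb : Bornology.IsBounded A) (hnt : A.Nontrivial)
    (hd : Metric.diam A = Real.sqrt 2) (hr : chebRadius A = 1) :
    ∀ ε ∈ Set.Ioo (0 : ℝ) (Real.sqrt 2), ∀ p : ℕ, 0 < p →
      ∃ z : Fin (p + 1) → H, (∀ i, z i ∈ A) ∧
        ∀ i j, i ≠ j → Real.sqrt 2 - ε ≤ ‖z i - z j‖ := by
  classical
  set r : ℝ := Real.sqrt 2 with hrdef
  have hr0 : 0 ≤ r := Real.sqrt_nonneg 2
  have hr2 : r ^ 2 = 2 := Real.sq_sqrt (by norm_num)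
  have hr1 : 1 < r := by nlinarith
  have hrlt : r < 2 := by nlinarith
  haveI : Nonempty A := hnt.nonempty.to_subtype
  obtain ⟨C, hC⟩ := hb.exists_norm_le
  have hbdd : ∀ y : H, BddAbove (Set.range fun x : A => ‖(x : H) - y‖) := by
    intro y
    refine ⟨C + ‖y‖, ?_⟩
    rintro _ ⟨x, rfl⟩
    calc ‖(x : H) - y‖ ≤ ‖(x : H)‖ + ‖y‖ := norm_sub_le _ _
    _ ≤ C + ‖y‖ := by have := hC x x.2; linarith
  have hsup_ge : ∀ y : H, (1 : ℝ) ≤ ⨆ x : A, ‖(x : H) - y‖ := by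
    intro y
    rw [← hr]
    exact ciInf_le ⟨0, by rintro _ ⟨y', rfl⟩; exact Real.iSup_nonneg fun x => norm_nonneg _⟩ y
  have hnear : ∀ (y : H) (δ' : ℝ), 0 < δ' → ∃ x ∈ A, 1 - δ' < ‖x - y‖ := by
    intro y δ' hδ'
    have h : (1 : ℝ) - δ' < ⨆ x : A, ‖(x : H) - y‖ := lt_of_lt_of_le (by linarith) (hsup_ge y)
    obtain ⟨x, hx⟩ := exists_lt_of_lt_ciSup h
    exact ⟨x, x.2, hx⟩
  have hcenter : ∀ δ' : ℝ, 0 < δ' → ∃ c : H, ∀ x ∈ A, ‖x - c‖ ≤ 1 + δ' := by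
    intro δ' hδ'
    have h : chebRadius A < 1 + δ' := by rw [hr]; linarith
    obtain ⟨c, hc⟩ := exists_lt_of_ciInf_lt h
    exact ⟨c, fun x hx => le_of_lt (lt_of_le_of_lt (le_ciSup (hbdd c) ⟨x, hx⟩) hc)⟩
  have hdiam2 : ∀ x ∈ A, ∀ y ∈ A, ‖x - y‖ ≤ r := by
    intro x hx y hy
    rw [← dist_eq_norm, ← hd]
    exact Metric.dist_le_diam_of_mem hb hx hy
  intro ε hε p hp
  obtain ⟨hε0, hεr⟩ := hε
  have hp1 : (1 : ℝ) ≤ (p : ℝ) := by exact_mod_cast hp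
  set M : ℝ := 7 * (p : ℝ) ^ 2 + p with hMdef
  have hM1 : (1 : ℝ) ≤ M := aux_oneM hp1 hMdef
  have hM3p : 3 * (p : ℝ) ≤ M := aux_threeP hp1 hMdef
  have hM0 : (0 : ℝ) < M := by linarith
  have hMpow_pos : (0 : ℝ) < M ^ (p + 1) := pow_pos hM0 _
  set e : ℝ := ε / (6 * M ^ (p + 1)) with hedef
  have he0 : 0 < e := div_pos hε0 (by positivity)
  set δ : ℝ := min 1 (e ^ 2) with hδdef
  have hδ0 : 0 < δ := lt_min one_pos (by positivity)
  have hδ1 : δ ≤ 1 := min_le_left _ _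
  set s : ℝ := Real.sqrt δ with hsdef
  have hs0 : 0 < s := Real.sqrt_pos.mpr hδ0
  have hs2 : s ^ 2 = δ := Real.sq_sqrt hδ0.le
  have hδs : δ ≤ s := by
    have h1 := Real.sqrt_le_sqrt (aux_dsq hδ0 hδ1)
    rwa [Real.sqrt_sq hδ0.le] at h1
  have hse : s ≤ e := by
    calc s ≤ Real.sqrt (e ^ 2) := Real.sqrt_le_sqrt (min_le_right _ _)
    _ = e := Real.sqrt_sq he0.le
  have hMe : M ^ (p + 1) * e = ε / 6 := by
    rw [hedef]; field_simp
  have hMs : M ^ (p + 1) * s ≤ ε / 6 := by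
    rw [← hMe]; exact mul_le_mul_of_nonneg_left hse hMpow_pos.le
  have hε6 : ε / 6 ≤ 1 := by linarith
  have hMk : ∀ k : ℕ, k ≤ p + 1 → M ^ k * s ≤ ε / 6 := by
    intro k hk
    have h1 : M ^ k ≤ M ^ (p + 1) := pow_le_pow_right₀ hM1 hk
    exact le_trans (mul_le_mul_of_nonneg_right h1 hs0.le) hMs
  obtain ⟨c, hc⟩ := hcenter δ hδ0
  -- the key induction: k+1 points, each at distance ≥ 1 - M^(k+1)·s from c,
  -- with pairwise inner products (of the shifted vectors) at most M^(k+1)·s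
  have key : ∀ k : ℕ, k ≤ p → ∃ z : Fin (k + 1) → H,
      (∀ i, z i ∈ A) ∧ (∀ i, 1 - M ^ (k + 1) * s ≤ ‖z i - c‖) ∧
      (∀ i j, i ≠ j → (inner ℝ (z i - c) (z j - c) : ℝ) ≤ M ^ (k + 1) * s) := by
    intro k
    induction k with
    | zero =>
      intro _
      obtain ⟨x, hxA, hx⟩ := hnear c δ hδ0
      refine ⟨fun _ => x, fun _ => hxA, fun _ => ?_,
        fun i j hij => absurd (by omega : i = j) hij⟩
      have h1 : s ≤ M ^ (0 + 1) * s := by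
        rw [pow_one]
        calc s = 1 * s := (one_mul s).symm
        _ ≤ M * s := mul_le_mul_of_nonneg_right hM1 hs0.le
      linarith
    | succ n ih =>
      intro hn
      obtain ⟨z, hzA, hzn, hzi⟩ := ih (Nat.le_of_succ_le hn)
      have hn1p : (n : ℝ) + 1 ≤ (p : ℝ) := by exact_mod_cast hn
      have hMn1 : (1 : ℝ) ≤ M ^ (n + 1) := one_le_pow₀ hM1
      have hMn1p : M ^ (n + 1) * s ≤ ε / 6 := hMk (n + 1) (by omega)
      have hMn2p : M ^ (n + 2) * s ≤ ε / 6 := hMk (n + 2) (by omega)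
      have hη : s ≤ M ^ (n + 1) * s := by
        calc s = 1 * s := (one_mul s).symm
        _ ≤ M ^ (n + 1) * s := mul_le_mul_of_nonneg_right hMn1 hs0.le
      set S : H := ∑ i, (z i - c) with hSdef
      have hznorm_le : ∀ i, ‖z i - c‖ ≤ 1 + δ := fun i => hc _ (hzA i)
      have hSnorm : ‖S‖ ≤ 2 * p := by
        calc ‖S‖ ≤ ∑ i, ‖z i - c‖ := norm_sum_le _ _
        _ ≤ ((n : ℝ) + 1) * (1 + δ) := by
            have h := Finset.sum_le_card_nsmul Finset.univ (fun i => ‖z i - c‖) (1 + δ)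
              (fun i _ => hznorm_le i)
            simp only [Finset.card_univ, Fintype.card_fin, nsmul_eq_mul] at h
            push_cast at h
            linarith
        _ ≤ (p : ℝ) * 2 :=
            mul_le_mul hn1p (by linarith) (by linarith) (by linarith)
        _ = 2 * p := by ring
      have hSnn : 0 ≤ ‖S‖ := norm_nonneg S
      obtain ⟨x, hxA, hx⟩ := hnear (c + s • S) δ hδ0
      have hx' : 1 - δ < ‖(x - c) - s • S‖ := by
        rwa [show x - (c + s • S) = (x - c) - s • S by abel] at hx
      have hu_le : ‖x - c‖ ≤ 1 + δ := hc x hxA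
      have hunn : 0 ≤ ‖x - c‖ := norm_nonneg _
      have hsS : ‖s • S‖ = s * ‖S‖ := by
        rw [norm_smul, Real.norm_eq_abs, abs_of_pos hs0]
      have hps : s ≤ (p : ℝ) * s := by
        calc s = 1 * s := (one_mul s).symm
        _ ≤ (p : ℝ) * s := mul_le_mul_of_nonneg_right hp1 hs0.le
      have hu_ge : 1 - 3 * p * s ≤ ‖x - c‖ := by
        have h1 : ‖(x - c) - s • S‖ ≤ ‖x - c‖ + ‖s • S‖ := norm_sub_le _ _
        rw [hsS] at h1
        have h2 : s * ‖S‖ ≤ s * (2 * p) := mul_le_mul_of_nonneg_left hSnorm hs0.le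
        linarith
      have h3pM : 3 * (p : ℝ) * s ≤ M ^ (n + 2) * s := by
        have h1 : M ≤ M ^ (n + 2) := by
          calc M = M ^ 1 := (pow_one M).symm
          _ ≤ M ^ (n + 2) := pow_le_pow_right₀ hM1 (by omega)
        exact mul_le_mul_of_nonneg_right (le_trans hM3p h1) hs0.le
      have hu0 : (0 : ℝ) ≤ 1 - 3 * p * s := by linarith
      have h3pM1 : 3 * (p : ℝ) * s ≤ 1 := by linarith
      have hw1 : M ^ (n + 1) * s ≤ 1 := by linarith
      -- bound on ⟪x - c, S⟫
      have hinnS : (inner ℝ (x - c) S : ℝ) ≤ 4 * p ^ 2 * s := by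
        have hexp : ‖(x - c) - s • S‖ ^ 2
            = ‖x - c‖ ^ 2 - 2 * (s * (inner ℝ (x - c) S : ℝ)) + s ^ 2 * ‖S‖ ^ 2 := by
          rw [norm_sub_sq_real, real_inner_smul_right, hsS, mul_pow]
        have h1 : (1 - δ) ^ 2 ≤ ‖(x - c) - s • S‖ ^ 2 :=
          aux_sq_ge (by linarith) hx'.le
        exact aux_innS hp1 hs0 hs2 hexp h1 hunn hu_le hSnn hSnorm
      -- lower bound on each ⟪x - c, z i - c⟫
      have hlow : ∀ i, -(3 * p * s + M ^ (n + 1) * s) ≤ (inner ℝ (x - c) (z i - c) : ℝ) := by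
        intro i
        have hd2 : ‖x - z i‖ ≤ r := hdiam2 x hxA _ (hzA i)
        have hd2' : ‖x - z i‖ ^ 2 ≤ 2 := by
          have := aux_sq_le (norm_nonneg (x - z i)) hd2
          linarith [hr2]
        have hexp : ‖x - z i‖ ^ 2
            = ‖x - c‖ ^ 2 - 2 * (inner ℝ (x - c) (z i - c) : ℝ) + ‖z i - c‖ ^ 2 := by
          rw [show x - z i = (x - c) - (z i - c) by abel, norm_sub_sq_real]
        exact aux_low (by positivity) (by positivity) h3pM1 hw1 hu_ge (hzn i) hd2' hexp
      -- upper bound on each ⟪x - c, z j - c⟫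
      have hnew : ∀ j, (inner ℝ (x - c) (z j - c) : ℝ) ≤ M ^ (n + 2) * s := by
        intro j
        have hsum : (inner ℝ (x - c) S : ℝ) = ∑ i, (inner ℝ (x - c) (z i - c) : ℝ) := by
          rw [hSdef, inner_sum]
        have herase := Finset.sum_erase_add Finset.univ
          (fun i => (inner ℝ (x - c) (z i - c) : ℝ)) (Finset.mem_univ j)
        have hcard : (Finset.univ.erase j).card = n := by
          rw [Finset.card_erase_of_mem (Finset.mem_univ j), Finset.card_univ]
          simp
        have hlb : (n : ℝ) * (-(3 * p * s + M ^ (n + 1) * s)) ≤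
            ∑ i ∈ Finset.univ.erase j, (inner ℝ (x - c) (z i - c) : ℝ) := by
          have h := Finset.card_nsmul_le_sum (Finset.univ.erase j)
            (fun i => (inner ℝ (x - c) (z i - c) : ℝ)) (-(3 * p * s + M ^ (n + 1) * s))
            (fun i _ => hlow i)
          rw [hcard, nsmul_eq_mul] at h
          exact h
        have hmain : (inner ℝ (x - c) (z j - c) : ℝ) ≤
            4 * p ^ 2 * s + (n : ℝ) * (3 * p * s + M ^ (n + 1) * s) := by
          have h := hinnS
          rw [hsum, ← herase] at h
          linarith
        have hpow : M ^ (n + 2) * s = (7 * (p : ℝ) ^ 2 + p) * (M ^ (n + 1) * s) := by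
          rw [pow_succ, hMdef]; ring
        rw [hpow]
        exact aux_new hp1 (Nat.cast_nonneg n) (by linarith) hs0 hη hmain
      -- assemble the new family
      have hmono : M ^ (n + 1) * s ≤ M ^ (n + 2) * s :=
        mul_le_mul_of_nonneg_right (pow_le_pow_right₀ hM1 (by omega)) hs0.le
      refine ⟨Fin.snoc z x, ?_, ?_, ?_⟩
      · intro i
        refine Fin.lastCases ?_ (fun i' => ?_) i
        · simpa using hxA
        · simpa using hzA i'
      · intro i
        refine Fin.lastCases ?_ (fun i' => ?_) i
        · simp only [Fin.snoc_last]
          linarith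
        · simp only [Fin.snoc_castSucc]
          have := hzn i'
          linarith
      · intro i j
        refine Fin.lastCases ?_ (fun i' => ?_) i <;> refine Fin.lastCases ?_ (fun j' => ?_) j
        · intro h; exact absurd rfl h
        · intro _
          simp only [Fin.snoc_last, Fin.snoc_castSucc]
          exact hnew j'
        · intro _
          simp only [Fin.snoc_last, Fin.snoc_castSucc]
          rw [real_inner_comm]
          exact hnew i'
        · intro h
          simp only [Fin.snoc_castSucc]
          have h' : i' ≠ j' := fun e => h (by rw [e])
          exact le_trans (hzi i' j' h') hmono
  -- conclude
  obtain ⟨z, hzA, hzn, hzi⟩ := key p le_rfl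
  refine ⟨z, hzA, ?_⟩
  intro i j hij
  set η : ℝ := M ^ (p + 1) * s with hηdef
  have hη0 : 0 < η := by positivity
  have hη6 : 6 * η ≤ ε := by linarith [hMs]
  have hexp : ‖z i - z j‖ ^ 2
      = ‖z i - c‖ ^ 2 - 2 * (inner ℝ (z i - c) (z j - c) : ℝ) + ‖z j - c‖ ^ 2 := by
    rw [show z i - z j = (z i - c) - (z j - c) by abel, norm_sub_sq_real]
  exact aux_final hr2 hr0 hε0 hεr hη0 hη6 (by linarith [hMs]) (hzn i) (hzn j)
    (hzi i j hij) (norm_nonneg _) hexp
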